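/- Let ρ be a finite positive Borel measure on ℝ, t > 1, and f_t(x) = inf{y ≥ 0 : ∫ (s²+1)/((x-s)²+y²) dρ(s) ≤ 1/(t-1)}. Then for every x ∈ ℝ, f_t(x) > 0 if and only if ∫ (s²+1)/(x-s)² dρ(s) > 1/(t-1). -/

import Mathlib

open MeasureTheory Set Filter Topology ENNReal

noncomputable def ft (ρ : Measure ℝ) (t x : ℝ) : ℝ :=
  sInf {y : ℝ | 0 ≤ y ∧
    (∫⁻ s : ℝ, ENNReal.ofReal ((s ^ 2 + 1) / ((x - s) ^ 2 + y ^ 2)) ∂ρ)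
      ≤ ENNReal.ofReal (1 / (t - 1))}

theorem stmt_8 (ρ : Measure ℝ) [IsFiniteMeasure ρ] (t : ℝ) (ht : 1 < t) (x : ℝ) :
    0 < ft ρ t x ↔
      ENNReal.ofReal (1 / (t - 1)) <
        ∫⁻ s : ℝ, ENNReal.ofReal ((s ^ 2 + 1) / (x - s) ^ 2) ∂ρ := by
  set c : ℝ≥0∞ := ENNReal.ofReal (1 / (t - 1)) with hc_def
  have hc : 0 < c := ENNReal.ofReal_pos.mpr (one_div_pos.mpr (by linarith))
  set F : ℝ → ℝ → ℝ≥0∞ :=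
    fun y s => ENNReal.ofReal ((s ^ 2 + 1) / ((x - s) ^ 2 + y ^ 2)) with hF_def
  set S : Set ℝ := {y : ℝ | 0 ≤ y ∧ (∫⁻ s : ℝ, F y s ∂ρ) ≤ c} with hS_def
  have hft : ft ρ t x = sInf S := rfl
  have hbdd : BddBelow S := ⟨0, fun y hy => hy.1⟩
  have hmeas : ∀ y : ℝ, Measurable (F y) := by
    intro y
    apply Measurable.ennreal_ofReal
    fun_prop
  -- S is nonempty via dominated convergence
  have hS_ne : S.Nonempty := by
    have hdct : Tendsto (fun n : ℕ => ∫⁻ s, F ((n : ℝ) + 1) s ∂ρ) atTop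
        (𝓝 (∫⁻ _ : ℝ, (0 : ℝ≥0∞) ∂ρ)) := by
      apply tendsto_lintegral_of_dominated_convergence
        (fun _ => ENNReal.ofReal (2 * x ^ 2 + 3))
      · intro n; exact hmeas _
      · intro n
        refine Eventually.of_forall fun s => ?_
        apply ENNReal.ofReal_le_ofReal
        have hd : (0 : ℝ) < (x - s) ^ 2 + ((n : ℝ) + 1) ^ 2 := by positivity
        rw [div_le_iff₀ hd]
        have hn1 : (1 : ℝ) ≤ ((n : ℝ) + 1) ^ 2 := by
          have : (0 : ℝ) ≤ (n : ℝ) := Nat.cast_nonneg n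
          nlinarith
        have h1 : s ^ 2 + 1 ≤ 2 * (x - s) ^ 2 + 2 * x ^ 2 + 1 := by
          nlinarith [sq_nonneg (x + (x - s))]
        have h2 : 2 * (x - s) ^ 2 + 2 * x ^ 2 + 1
            ≤ (2 * x ^ 2 + 3) * ((x - s) ^ 2 + ((n : ℝ) + 1) ^ 2) := by
          nlinarith [mul_nonneg (sq_nonneg x) (sq_nonneg (x - s)),
            mul_nonneg (by positivity : (0:ℝ) ≤ 2 * x ^ 2 + 3)
              (by linarith : (0:ℝ) ≤ ((n : ℝ) + 1) ^ 2 - 1)]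
        linarith
      · rw [lintegral_const]
        exact ENNReal.mul_ne_top ENNReal.ofReal_ne_top (measure_ne_top ρ univ)
      · refine Eventually.of_forall fun s => ?_
        have hre : Tendsto (fun n : ℕ => (s ^ 2 + 1) / ((x - s) ^ 2 + ((n : ℝ) + 1) ^ 2))
            atTop (𝓝 0) := by
          apply Tendsto.div_atTop (tendsto_const_nhds)
          apply tendsto_atTop_mono (fun n : ℕ => ?_) tendsto_natCast_atTop_atTop
          have : (0 : ℝ) ≤ (n : ℝ) := Nat.cast_nonneg n
          nlinarith [sq_nonneg (x - s)]
        have := (ENNReal.continuous_ofReal.tendsto 0).comp hre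
        simpa [hF_def, Function.comp_def] using this
    rw [lintegral_zero] at hdct
    obtain ⟨n, hn⟩ := (hdct.eventually (Iio_mem_nhds hc)).exists
    exact ⟨(n : ℝ) + 1, ⟨by positivity, le_of_lt hn⟩⟩
  have hsInf_nonneg : 0 ≤ sInf S := le_csInf hS_ne fun y hy => hy.1
  constructor
  · intro h
    by_contra hlt
    push_neg at hlt
    have h0S : (0 : ℝ) ∈ S := by
      refine ⟨le_refl 0, ?_⟩
      simpa [hF_def] using hlt
    have := csInf_le hbdd h0S
    rw [hft] at h
    linarith
  · intro h
    by_contra h0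
    push_neg at h0
    rw [hft] at h0
    have hft0 : sInf S = 0 := le_antisymm h0 hsInf_nonneg
    obtain ⟨u, -, hu_tendsto, hu_mem⟩ := exists_seq_tendsto_sInf hS_ne hbdd
    rw [hft0] at hu_tendsto
    have hu2 : Tendsto (fun n => (u n) ^ 2) atTop (𝓝 0) := by
      simpa using hu_tendsto.pow 2
    have key : (∫⁻ s : ℝ, ENNReal.ofReal ((s ^ 2 + 1) / (x - s) ^ 2) ∂ρ)
        ≤ liminf (fun n => ∫⁻ s, F (u n) s ∂ρ) atTop := by
      refine le_trans ?_ (lintegral_liminf_le fun n => hmeas (u n))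
      apply lintegral_mono
      intro s
      by_cases hs : x - s = 0
      · simp [hs]
      · have hd : ((x - s) ^ 2 : ℝ) ≠ 0 := pow_ne_zero _ hs
        have hre : Tendsto (fun n => (s ^ 2 + 1) / ((x - s) ^ 2 + (u n) ^ 2))
            atTop (𝓝 ((s ^ 2 + 1) / ((x - s) ^ 2 + 0))) :=
          tendsto_const_nhds.div (tendsto_const_nhds.add hu2) (by simpa using hd)
        have hconv : Tendsto (fun n => F (u n) s) atTop
            (𝓝 (ENNReal.ofReal ((s ^ 2 + 1) / (x - s) ^ 2))) := by
          have := (ENNReal.continuous_ofReal.tendsto _).comp hre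
          simpa [hF_def, Function.comp_def] using this
        exact hconv.liminf_eq.ge
    have hle : liminf (fun n => ∫⁻ s, F (u n) s ∂ρ) atTop ≤ c := by
      calc liminf (fun n => ∫⁻ s, F (u n) s ∂ρ) atTop
          ≤ liminf (fun _ : ℕ => c) atTop :=
            Filter.liminf_le_liminf (Eventually.of_forall fun n => (hu_mem n).2)
        _ = c := liminf_const c
    exact absurd (le_trans key hle) (not_le.mpr h)
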